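/- Fix ρ₁ > 0 > ρ₂ and β₁, β₂ > −1, β₃ > 0. Define ℓ₁(x) = ∫₀^{ρ₁} t^{x−1}(ρ₁−t)^{β₁}(t−ρ₂)^{β₂} dt and ℓ₂(x) = (−1)^{x−β₃} ∫_{ρ₂}^{0} (−t)^{x−1}(ρ₁−t)^{β₁}(t−ρ₂)^{β₂} dt for x ∈ β₃ + ℕ₀. Then the vectors (ℓ₁(β₃), ℓ₁(β₃+1)) and (ℓ₂(β₃), ℓ₂(β₃+1)) in ℝ² are linearly independent; consequently any solution of the hypergeometric difference equation on β₃+ℕ₀ with these parameters is a real linear combination δ₁ℓ₁ + δ₂ℓ₂. -/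

import Mathlib

open MeasureTheory Set intervalIntegral

lemma base_int {a b p q : ℝ} (hab : a < b) (hp : -1 < p) (hq : -1 < q) :
    IntegrableOn (fun t => (t - a) ^ p * (b - t) ^ q) (Set.Ioo a b) := by
  set m := (a + b) / 2 with hm
  have ham : a < m := by simp [hm]; linarith
  have hmb : m < b := by simp [hm]; linarith
  have hmeas : AEStronglyMeasurable (fun t => (t - a) ^ p * (b - t) ^ q)
      (volume.restrict (Set.Ioo a b)) := by
    apply ContinuousOn.aestronglyMeasurable _ measurableSet_Ioo
    apply ContinuousOn.mul
    · exact (continuousOn_id.sub continuousOn_const).rpow_const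
        (fun t ht => Or.inl (by exact ne_of_gt (by simp only [Pi.sub_apply, id]; linarith [ht.1]) ))
    · exact (continuousOn_const.sub continuousOn_id).rpow_const
        (fun t ht => Or.inl (ne_of_gt (by simp only [Pi.sub_apply, id]; linarith [ht.2])))
  have h1 : IntegrableOn (fun t => (t - a) ^ p) (Set.Ioo a m) := by
    have := (intervalIntegrable_rpow' (a := 0) (b := m - a) hp).comp_sub_right a
    rw [show (0:ℝ) + a = a by ring, show m - a + a = m by ring,
      intervalIntegrable_iff_integrableOn_Ioc_of_le (le_of_lt ham)] at this
    exact this.mono_set Ioo_subset_Ioc_self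
  have h2 : IntegrableOn (fun t => (b - t) ^ q) (Set.Ioo m b) := by
    have := (intervalIntegrable_rpow' (a := 0) (b := b - m) hq).comp_sub_left b
    rw [show b - (0:ℝ) = b by ring, show b - (b - m) = m by ring] at this
    replace this := this.symm
    rw [intervalIntegrable_iff_integrableOn_Ioc_of_le (le_of_lt hmb)] at this
    exact this.mono_set Ioo_subset_Ioc_self
  have key : ∀ s : Set ℝ, s ⊆ Set.Ioo a b → MeasurableSet s →
      (∀ g : ℝ → ℝ, IntegrableOn g s volume → ∀ M : ℝ,
        (∀ t ∈ s, (t - a) ^ p * (b - t) ^ q ≤ M * g t) →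
        IntegrableOn (fun t => (t - a) ^ p * (b - t) ^ q) s volume) := by
    intro s hs hsm g hg M hbd
    refine Integrable.mono' (hg.const_mul M) (hmeas.mono_set hs) ?_
    rw [ae_restrict_iff' hsm]
    refine ae_of_all _ fun t ht => ?_
    have h0 : 0 < t - a := by linarith [(hs ht).1]
    have h0' : 0 < b - t := by linarith [(hs ht).2]
    rw [Real.norm_eq_abs, abs_of_nonneg (by positivity)]
    exact hbd t ht
  have hM : ∀ t ∈ Set.Ioo a b, 0 < b - t ∧ 0 < t - a := fun t ht => ⟨by linarith [ht.2], by linarith [ht.1]⟩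
  have hIoo1 : IntegrableOn (fun t => (t - a) ^ p * (b - t) ^ q) (Set.Ioo a m) := by
    refine key _ (Ioo_subset_Ioo le_rfl (le_of_lt hmb)) measurableSet_Ioo _ h1
      (max ((b - a) ^ q) ((b - m) ^ q)) fun t ht => ?_
    have h0 : 0 < t - a := by linarith [ht.1]
    have h0' : 0 < b - t := by linarith [ht.2, hmb]
    rw [mul_comm (max _ _ : ℝ) _]
    refine mul_le_mul_of_nonneg_left ?_ (by positivity)
    rcases le_or_gt 0 q with h | h
    · exact le_max_of_le_left (Real.rpow_le_rpow (le_of_lt h0') (by linarith [ht.1]) h)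
    · refine le_max_of_le_right (Real.rpow_le_rpow_of_nonpos (by simp only [hm]; linarith : (0:ℝ) < b - m) (by linarith [ht.2]) (le_of_lt h))
  have hIoo2 : IntegrableOn (fun t => (t - a) ^ p * (b - t) ^ q) (Set.Ioo m b) := by
    refine key _ (Ioo_subset_Ioo (le_of_lt ham) le_rfl) measurableSet_Ioo _ h2
      (max ((b - a) ^ p) ((m - a) ^ p)) fun t ht => ?_
    have h0 : 0 < t - a := by linarith [ht.1, ham]
    have h0' : 0 < b - t := by linarith [ht.2]
    rw [show max ((b-a)^p) ((m-a)^p) * (b - t) ^ q = (b - t) ^ q * max ((b-a)^p) ((m-a)^p) by ring,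
      mul_comm ((t - a) ^ p) _]
    refine mul_le_mul_of_nonneg_left ?_ (by positivity)
    rcases le_or_gt 0 p with h | h
    · exact le_max_of_le_left (Real.rpow_le_rpow (le_of_lt h0) (by linarith [ht.2]) h)
    · refine le_max_of_le_right (Real.rpow_le_rpow_of_nonpos (by simp only [hm]; linarith : (0:ℝ) < m - a) (by linarith [ht.1]) (le_of_lt h))
  have : IntegrableOn (fun t => (t - a) ^ p * (b - t) ^ q) (Set.Ioo a m ∪ Set.Ioo m b ∪ {m}) := by
    refine (hIoo1.union hIoo2).union ?_
    exact (integrableOn_singleton_iff).mpr (Or.inr (by simp))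
  refine this.mono_set fun t ht => ?_
  rcases lt_trichotomy t m with h | h | h
  · exact Or.inl (Or.inl ⟨ht.1, h⟩)
  · exact Or.inr (by simp [h])
  · exact Or.inl (Or.inr ⟨h, ht.2⟩)

lemma full_int {a b p q : ℝ} (hab : a < b) (hp : -1 < p) (hq : -1 < q) {c : ℝ → ℝ}
    (hc : ContinuousOn c (Set.Icc a b)) :
    IntegrableOn (fun t => (t - a) ^ p * (b - t) ^ q * c t) (Set.Ioo a b) := by
  obtain ⟨C, hC⟩ := (isCompact_Icc (a := a) (b := b)).exists_bound_of_continuousOn hc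
  have hmeas : AEStronglyMeasurable (fun t => (t - a) ^ p * (b - t) ^ q * c t)
      (volume.restrict (Set.Ioo a b)) := by
    apply ContinuousOn.aestronglyMeasurable _ measurableSet_Ioo
    refine ContinuousOn.mul (ContinuousOn.mul ?_ ?_) (hc.mono Ioo_subset_Icc_self)
    · exact (continuousOn_id.sub continuousOn_const).rpow_const
        (fun t ht => Or.inl (by exact ne_of_gt (by simp only [Pi.sub_apply, id]; linarith [ht.1])))
    · exact (continuousOn_const.sub continuousOn_id).rpow_const
        (fun t ht => Or.inl (ne_of_gt (by simp only [Pi.sub_apply, id]; linarith [ht.2])))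
  refine Integrable.mono' ((base_int hab hp hq).const_mul C) hmeas ?_
  rw [ae_restrict_iff' measurableSet_Ioo]
  refine ae_of_all _ fun t ht => ?_
  have h0 : 0 < t - a := by linarith [ht.1]
  have h0' : 0 < b - t := by linarith [ht.2]
  rw [norm_mul, Real.norm_eq_abs, abs_of_nonneg (by positivity : (0:ℝ) ≤ (t-a)^p*(b-t)^q),
    show C * ((t-a)^p*(b-t)^q) = (t-a)^p*(b-t)^q * C by ring]
  exact mul_le_mul_of_nonneg_left (hC t ⟨le_of_lt ht.1, le_of_lt ht.2⟩) (by positivity)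

lemma full_pos {a b p q : ℝ} (hab : a < b) (hp : -1 < p) (hq : -1 < q) {c : ℝ → ℝ}
    (hc : ContinuousOn c (Set.Icc a b)) (hcpos : ∀ t ∈ Set.Ioo a b, 0 < c t) :
    0 < ∫ t in Set.Ioo a b, (t - a) ^ p * (b - t) ^ q * c t := by
  have hint := full_int hab hp hq hc
  have hnn : 0 ≤ᵐ[volume.restrict (Set.Ioo a b)]
      (fun t => (t - a) ^ p * (b - t) ^ q * c t) := by
    filter_upwards [ae_restrict_mem measurableSet_Ioo] with t ht
    have h0 : 0 < t - a := by linarith [ht.1]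
    have h0' : 0 < b - t := by linarith [ht.2]
    have := hcpos t ht
    positivity
  rw [setIntegral_pos_iff_support_of_nonneg_ae hnn hint]
  have hsub : Set.Ioo a b ⊆
      (Function.support fun t => (t - a) ^ p * (b - t) ^ q * c t) ∩ Set.Ioo a b := by
    intro t ht
    refine ⟨?_, ht⟩
    have h0 : 0 < t - a := by linarith [ht.1]
    have h0' : 0 < b - t := by linarith [ht.2]
    have := hcpos t ht
    exact Function.mem_support.2 (ne_of_gt (by positivity))
  refine lt_of_lt_of_le ?_ (measure_mono hsub)
  rw [Real.volume_Ioo]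
  simp [hab]

lemma rec₁ (ρ₁ ρ₂ β₁ β₂ x : ℝ) (hρ₁ : 0 < ρ₁) (hρ₂ : ρ₂ < 0)
    (hβ₁ : -1 < β₁) (hβ₂ : -1 < β₂) (hx : 0 < x) :
    (x + β₁ + β₂ + 2) *
        (∫ t in Set.Ioo (0:ℝ) ρ₁, t ^ (x + 2 - 1) * (ρ₁ - t) ^ β₁ * (t - ρ₂) ^ β₂) -
      ((ρ₁ + ρ₂) * (x + 1) + β₁ * ρ₂ + β₂ * ρ₁) *
        (∫ t in Set.Ioo (0:ℝ) ρ₁, t ^ (x + 1 - 1) * (ρ₁ - t) ^ β₁ * (t - ρ₂) ^ β₂) +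
      ρ₁ * ρ₂ * x *
        (∫ t in Set.Ioo (0:ℝ) ρ₁, t ^ (x - 1) * (ρ₁ - t) ^ β₁ * (t - ρ₂) ^ β₂) = 0 := by
  have hcont3 : ContinuousOn (fun t : ℝ => (t - ρ₂) ^ β₂) (Set.Icc 0 ρ₁) :=
    (continuousOn_id.sub continuousOn_const).rpow_const
      (fun t ht => Or.inl (ne_of_gt (by simp only [Pi.sub_apply, id]; linarith [ht.1])))
  have hint : ∀ y : ℝ, 0 < y →
      IntegrableOn (fun t => t ^ (y - 1) * (ρ₁ - t) ^ β₁ * (t - ρ₂) ^ β₂)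
        (Set.Ioo (0:ℝ) ρ₁) := by
    intro y hy
    have := full_int hρ₁ (by linarith : (-1:ℝ) < y - 1) hβ₁ hcont3
    simpa using this
  set c₂ := -(x + β₁ + β₂ + 2) with hc₂
  set c₁ := (ρ₁ + ρ₂) * (x + 1) + β₁ * ρ₂ + β₂ * ρ₁ with hc₁
  set c₀ := -(ρ₁ * ρ₂ * x) with hc₀
  set D : ℝ → ℝ := fun t => c₂ * (t ^ (x + 2 - 1) * (ρ₁ - t) ^ β₁ * (t - ρ₂) ^ β₂) +
      c₁ * (t ^ (x + 1 - 1) * (ρ₁ - t) ^ β₁ * (t - ρ₂) ^ β₂) +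
      c₀ * (t ^ (x - 1) * (ρ₁ - t) ^ β₁ * (t - ρ₂) ^ β₂) with hD
  set F : ℝ → ℝ := fun t => t ^ x * (ρ₁ - t) ^ (β₁ + 1) * (t - ρ₂) ^ (β₂ + 1) with hF
  have hDint : IntegrableOn D (Set.Ioo (0:ℝ) ρ₁) := by
    exact (((hint (x+2) (by linarith)).const_mul c₂).add
      ((hint (x+1) (by linarith)).const_mul c₁)).add ((hint x hx).const_mul c₀)
  have hderiv : ∀ t ∈ Set.Ioo (0:ℝ) ρ₁, HasDerivAt F (D t) t := by
    intro t ht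
    have ht0 : 0 < t := ht.1
    have htρ : 0 < ρ₁ - t := by linarith [ht.2]
    have htρ₂ : 0 < t - ρ₂ := by linarith
    have h1 : HasDerivAt (fun t : ℝ => t ^ x) (x * t ^ (x - 1)) t :=
      Real.hasDerivAt_rpow_const (Or.inl ht0.ne')
    have h2 : HasDerivAt (fun t : ℝ => (ρ₁ - t) ^ (β₁ + 1))
        ((-1) * (β₁ + 1) * (ρ₁ - t) ^ (β₁ + 1 - 1)) t :=
      HasDerivAt.rpow_const ((hasDerivAt_id t).const_sub ρ₁) (Or.inl htρ.ne')
    have h3 : HasDerivAt (fun t : ℝ => (t - ρ₂) ^ (β₂ + 1))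
        (1 * (β₂ + 1) * (t - ρ₂) ^ (β₂ + 1 - 1)) t :=
      HasDerivAt.rpow_const ((hasDerivAt_id t).sub_const ρ₂) (Or.inl htρ₂.ne')
    have := (h1.mul h2).mul h3
    refine this.congr_deriv ?_
    have e1 : t ^ x = t ^ (x - 1) * t := by
      have := Real.rpow_add_one ht0.ne' (x - 1)
      simpa [show x - 1 + 1 = x by ring] using this
    have e2 : (ρ₁ - t) ^ (β₁ + 1) = (ρ₁ - t) ^ β₁ * (ρ₁ - t) := by
      simpa using Real.rpow_add_one htρ.ne' β₁
    have e3 : (t - ρ₂) ^ (β₂ + 1) = (t - ρ₂) ^ β₂ * (t - ρ₂) := by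
      simpa using Real.rpow_add_one htρ₂.ne' β₂
    have e4 : t ^ (x + 1 - 1) = t ^ (x - 1) * t := by
      simpa [show x + 1 - 1 = x - 1 + 1 by ring] using Real.rpow_add_one ht0.ne' (x - 1)
    have e5 : t ^ (x + 2 - 1) = t ^ (x - 1) * t * t := by
      have := Real.rpow_add ht0 (x - 1) 2
      rw [show x + 2 - 1 = x - 1 + 2 by ring, this, show (2:ℝ) = ((2:ℕ):ℝ) by norm_num,
        Real.rpow_natCast]
      ring
    simp only [hD, Pi.mul_apply, e4, e5, e1, e2, e3, show β₁ + 1 - 1 = β₁ by ring,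
      show β₂ + 1 - 1 = β₂ by ring, hc₂, hc₁, hc₀]
    ring
  have hFcont : ContinuousOn F (Set.Icc 0 ρ₁) := by
    apply ContinuousOn.mul
    apply ContinuousOn.mul
    · exact fun t _ => (Real.continuousAt_rpow_const t x (Or.inr hx.le)).continuousWithinAt
    · refine ContinuousOn.rpow_const (continuousOn_const.sub continuousOn_id) fun t ht => Or.inr (by linarith)
    · refine ContinuousOn.rpow_const (continuousOn_id.sub continuousOn_const) fun t ht => Or.inr (by linarith)
  have hIoc : IntegrableOn D (Set.Ioc (0:ℝ) ρ₁) := by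
    rwa [integrableOn_Ioc_iff_integrableOn_Ioo]
  have hftc : ∫ t in (0:ℝ)..ρ₁, D t = F ρ₁ - F 0 := by
    apply intervalIntegral.integral_eq_sub_of_hasDeriv_right_of_le hρ₁.le hFcont
    · exact fun t ht => (hderiv t ht).hasDerivWithinAt
    · rwa [intervalIntegrable_iff_integrableOn_Ioc_of_le hρ₁.le]
  have hF0 : F 0 = 0 := by
    simp [hF, Real.zero_rpow hx.ne']
  have hFρ : F ρ₁ = 0 := by
    simp [hF, Real.zero_rpow (by linarith : β₁ + 1 ≠ 0)]
  have hIoo : ∫ t in Set.Ioo (0:ℝ) ρ₁, D t = 0 := by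
    rw [← MeasureTheory.integral_Ioc_eq_integral_Ioo, ← intervalIntegral.integral_of_le hρ₁.le,
      hftc, hF0, hFρ, sub_zero]
  have hJ2 : Integrable (fun t => c₂ * (t ^ (x + 2 - 1) * (ρ₁ - t) ^ β₁ * (t - ρ₂) ^ β₂))
      (volume.restrict (Set.Ioo (0:ℝ) ρ₁)) := (hint (x+2) (by linarith)).const_mul c₂
  have hJ1 : Integrable (fun t => c₁ * (t ^ (x + 1 - 1) * (ρ₁ - t) ^ β₁ * (t - ρ₂) ^ β₂))
      (volume.restrict (Set.Ioo (0:ℝ) ρ₁)) := (hint (x+1) (by linarith)).const_mul c₁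
  have hJ0 : Integrable (fun t => c₀ * (t ^ (x - 1) * (ρ₁ - t) ^ β₁ * (t - ρ₂) ^ β₂))
      (volume.restrict (Set.Ioo (0:ℝ) ρ₁)) := (hint x hx).const_mul c₀
  have hJ21 : Integrable (fun t => c₂ * (t ^ (x + 2 - 1) * (ρ₁ - t) ^ β₁ * (t - ρ₂) ^ β₂)
      + c₁ * (t ^ (x + 1 - 1) * (ρ₁ - t) ^ β₁ * (t - ρ₂) ^ β₂))
      (volume.restrict (Set.Ioo (0:ℝ) ρ₁)) := hJ2.add hJ1
  have key : (∫ t in Set.Ioo (0:ℝ) ρ₁, D t) =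
      c₂ * (∫ t in Set.Ioo (0:ℝ) ρ₁, t ^ (x + 2 - 1) * (ρ₁ - t) ^ β₁ * (t - ρ₂) ^ β₂) +
      c₁ * (∫ t in Set.Ioo (0:ℝ) ρ₁, t ^ (x + 1 - 1) * (ρ₁ - t) ^ β₁ * (t - ρ₂) ^ β₂) +
      c₀ * (∫ t in Set.Ioo (0:ℝ) ρ₁, t ^ (x - 1) * (ρ₁ - t) ^ β₁ * (t - ρ₂) ^ β₂) := by
    rw [← MeasureTheory.integral_const_mul, ← MeasureTheory.integral_const_mul,
      ← MeasureTheory.integral_const_mul, ← MeasureTheory.integral_add hJ2 hJ1,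
      ← MeasureTheory.integral_add hJ21 hJ0]
  rw [key] at hIoo
  simp only [hc₂, hc₁, hc₀] at hIoo ⊢
  linarith [hIoo]

lemma subst_neg (ρ₁ ρ₂ β₁ β₂ y : ℝ) (hρ₂ : ρ₂ < 0) :
    (∫ t in Set.Ioo ρ₂ (0:ℝ), (-t) ^ (y - 1) * (ρ₁ - t) ^ β₁ * (t - ρ₂) ^ β₂)
      = ∫ t in Set.Ioo (0:ℝ) (-ρ₂), t ^ (y - 1) * (-ρ₂ - t) ^ β₂ * (t - (-ρ₁)) ^ β₁ := by
  have h2 : (∫ t in (0:ℝ)..(-ρ₂),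
        (fun u => (-u) ^ (y - 1) * (ρ₁ - u) ^ β₁ * (u - ρ₂) ^ β₂) (-t))
      = ∫ t in ρ₂..(0:ℝ), (-t) ^ (y - 1) * (ρ₁ - t) ^ β₁ * (t - ρ₂) ^ β₂ := by
    have := intervalIntegral.integral_comp_neg (a := (0:ℝ)) (b := -ρ₂)
      (f := fun u => (-u) ^ (y - 1) * (ρ₁ - u) ^ β₁ * (u - ρ₂) ^ β₂)
    simpa using this
  have h3 : (fun t : ℝ => (fun u => (-u) ^ (y - 1) * (ρ₁ - u) ^ β₁ * (u - ρ₂) ^ β₂) (-t))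
      = fun t : ℝ => t ^ (y - 1) * (-ρ₂ - t) ^ β₂ * (t - (-ρ₁)) ^ β₁ := by
    funext t
    simp only [neg_neg, sub_neg_eq_add]
    rw [show ρ₁ + t = t + ρ₁ by ring, show -t - ρ₂ = -ρ₂ - t by ring]
    ring
  rw [← MeasureTheory.integral_Ioc_eq_integral_Ioo,
    ← intervalIntegral.integral_of_le (le_of_lt hρ₂), ← h2, h3,
    intervalIntegral.integral_of_le (by linarith : (0:ℝ) ≤ -ρ₂),
    MeasureTheory.integral_Ioc_eq_integral_Ioo]

theorem stmt17 (ρ₁ ρ₂ β₁ β₂ β₃ : ℝ) (hρ₁ : 0 < ρ₁) (hρ₂ : ρ₂ < 0)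
    (hβ₁ : -1 < β₁) (hβ₂ : -1 < β₂) (hβ₃ : 0 < β₃)
    (ℓ₁ ℓ₂ : ℕ → ℝ)
    (hℓ₁ : ∀ k : ℕ, ℓ₁ k =
      ∫ t in Set.Ioo (0 : ℝ) ρ₁,
        t ^ (β₃ + (k : ℝ) - 1) * (ρ₁ - t) ^ β₁ * (t - ρ₂) ^ β₂)
    (hℓ₂ : ∀ k : ℕ, ℓ₂ k = (-1 : ℝ) ^ k *
      ∫ t in Set.Ioo ρ₂ (0 : ℝ),
        (-t) ^ (β₃ + (k : ℝ) - 1) * (ρ₁ - t) ^ β₁ * (t - ρ₂) ^ β₂) :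
    LinearIndependent ℝ ![(ℓ₁ 0, ℓ₁ 1), (ℓ₂ 0, ℓ₂ 1)] ∧
    ∀ ℓ : ℕ → ℝ,
      (∀ k : ℕ, (β₃ + (k : ℝ) + β₁ + β₂ + 2) * ℓ (k + 2) -
          ((ρ₁ + ρ₂) * (β₃ + (k : ℝ) + 1) + β₁ * ρ₂ + β₂ * ρ₁) * ℓ (k + 1) +
          ρ₁ * ρ₂ * (β₃ + (k : ℝ)) * ℓ k = 0) →
      ∃ δ₁ δ₂ : ℝ, ∀ k : ℕ, ℓ k = δ₁ * ℓ₁ k + δ₂ * ℓ₂ k := by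
  have hxpos : ∀ k : ℕ, (0:ℝ) < β₃ + k := fun k => by
    have := Nat.cast_nonneg (α := ℝ) k; linarith
  -- positivity of ℓ₁
  have hpos₁ : ∀ k : ℕ, 0 < ℓ₁ k := by
    intro k
    rw [hℓ₁ k]
    have h := full_pos (a := (0:ℝ)) (b := ρ₁) (p := β₃ + (k:ℝ) - 1) (q := β₁)
      (c := fun t => (t - ρ₂) ^ β₂) hρ₁ (by linarith [hxpos k]) hβ₁
      ((continuousOn_id.sub continuousOn_const).rpow_const
        (fun t ht => Or.inl (ne_of_gt (by simp only [Pi.sub_apply, id]; linarith [ht.1]))))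
      (fun t ht => Real.rpow_pos_of_pos (by linarith [ht.1]) _)
    simpa using h
  -- the auxiliary integral I
  set I : ℕ → ℝ := fun k => ∫ t in Set.Ioo ρ₂ (0:ℝ),
      (-t) ^ (β₃ + (k:ℝ) - 1) * (ρ₁ - t) ^ β₁ * (t - ρ₂) ^ β₂ with hIdef
  have hℓ₂I : ∀ k : ℕ, ℓ₂ k = (-1:ℝ) ^ k * I k := by
    intro k; rw [hℓ₂ k]
  have hIsub : ∀ k : ℕ, I k = ∫ t in Set.Ioo (0:ℝ) (-ρ₂),
      t ^ (β₃ + (k:ℝ) - 1) * (-ρ₂ - t) ^ β₂ * (t - (-ρ₁)) ^ β₁ := by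
    intro k
    simp only [hIdef]
    exact subst_neg ρ₁ ρ₂ β₁ β₂ (β₃ + (k:ℝ)) hρ₂
  have hIpos : ∀ k : ℕ, 0 < I k := by
    intro k
    rw [hIsub k]
    have h := full_pos (a := (0:ℝ)) (b := -ρ₂) (p := β₃ + (k:ℝ) - 1) (q := β₂)
      (c := fun t => (t - (-ρ₁)) ^ β₁) (by linarith) (by linarith [hxpos k]) hβ₂
      ((continuousOn_id.sub continuousOn_const).rpow_const
        (fun t ht => Or.inl (ne_of_gt (by simp only [Pi.sub_apply, id]; linarith [ht.1]))))
      (fun t ht => Real.rpow_pos_of_pos (by linarith [ht.1]) _)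
    simpa using h
  -- recurrence for ℓ₁
  have hrec₁ : ∀ k : ℕ, (β₃ + (k:ℝ) + β₁ + β₂ + 2) * ℓ₁ (k + 2) -
      ((ρ₁ + ρ₂) * (β₃ + (k:ℝ) + 1) + β₁ * ρ₂ + β₂ * ρ₁) * ℓ₁ (k + 1) +
      ρ₁ * ρ₂ * (β₃ + (k:ℝ)) * ℓ₁ k = 0 := by
    intro k
    have h := rec₁ ρ₁ ρ₂ β₁ β₂ (β₃ + (k:ℝ)) hρ₁ hρ₂ hβ₁ hβ₂ (hxpos k)
    rw [hℓ₁ k, hℓ₁ (k+1), hℓ₁ (k+2)]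
    push_cast
    simp only [show β₃ + ((k:ℝ) + 2) - 1 = β₃ + (k:ℝ) + 2 - 1 from by ring,
      show β₃ + ((k:ℝ) + 1) - 1 = β₃ + (k:ℝ) + 1 - 1 from by ring]
    linarith [h]
  -- recurrence for I
  have hrecI : ∀ k : ℕ, (β₃ + (k:ℝ) + β₁ + β₂ + 2) * I (k + 2) +
      ((ρ₁ + ρ₂) * (β₃ + (k:ℝ) + 1) + β₁ * ρ₂ + β₂ * ρ₁) * I (k + 1) +
      ρ₁ * ρ₂ * (β₃ + (k:ℝ)) * I k = 0 := by
    intro k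
    have h := rec₁ (-ρ₂) (-ρ₁) β₂ β₁ (β₃ + (k:ℝ)) (by linarith) (by linarith) hβ₂ hβ₁ (hxpos k)
    rw [hIsub k, hIsub (k+1), hIsub (k+2)]
    push_cast
    simp only [show β₃ + ((k:ℝ) + 2) - 1 = β₃ + (k:ℝ) + 2 - 1 from by ring,
      show β₃ + ((k:ℝ) + 1) - 1 = β₃ + (k:ℝ) + 1 - 1 from by ring]
    linarith [h]
  -- recurrence for ℓ₂
  have hrec₂ : ∀ k : ℕ, (β₃ + (k:ℝ) + β₁ + β₂ + 2) * ℓ₂ (k + 2) -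
      ((ρ₁ + ρ₂) * (β₃ + (k:ℝ) + 1) + β₁ * ρ₂ + β₂ * ρ₁) * ℓ₂ (k + 1) +
      ρ₁ * ρ₂ * (β₃ + (k:ℝ)) * ℓ₂ k = 0 := by
    intro k
    rw [hℓ₂I k, hℓ₂I (k+1), hℓ₂I (k+2)]
    simp only [pow_succ]
    linear_combination ((-1:ℝ)^k) * hrecI k
  have hl20 : ℓ₂ 0 = I 0 := by rw [hℓ₂I 0]; simp
  have hl21 : ℓ₂ 1 = -I 1 := by rw [hℓ₂I 1]; simp
  have hdet : ℓ₁ 0 * ℓ₂ 1 - ℓ₁ 1 * ℓ₂ 0 < 0 := by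
    rw [hl20, hl21]
    nlinarith [hpos₁ 0, hpos₁ 1, hIpos 0, hIpos 1]
  constructor
  · rw [LinearIndependent.pair_iff]
    intro s t hst
    have h1 : s * ℓ₁ 0 + t * ℓ₂ 0 = 0 := by
      have := congrArg Prod.fst hst; simpa using this
    have h2 : s * ℓ₁ 1 + t * ℓ₂ 1 = 0 := by
      have := congrArg Prod.snd hst; simpa using this
    constructor
    · have hs : s * (ℓ₁ 0 * ℓ₂ 1 - ℓ₁ 1 * ℓ₂ 0) = 0 := by
        linear_combination ℓ₂ 1 * h1 - ℓ₂ 0 * h2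
      exact (mul_eq_zero.mp hs).resolve_right (ne_of_lt hdet)
    · have ht : t * (ℓ₁ 0 * ℓ₂ 1 - ℓ₁ 1 * ℓ₂ 0) = 0 := by
        linear_combination ℓ₁ 0 * h2 - ℓ₁ 1 * h1
      exact (mul_eq_zero.mp ht).resolve_right (ne_of_lt hdet)
  · intro ℓ hrec
    set Dt := ℓ₁ 0 * ℓ₂ 1 - ℓ₁ 1 * ℓ₂ 0 with hDtdef
    have hDt : Dt ≠ 0 := ne_of_lt hdet
    set δ₁ := (ℓ 0 * ℓ₂ 1 - ℓ 1 * ℓ₂ 0) / Dt with hδ₁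
    set δ₂ := (ℓ₁ 0 * ℓ 1 - ℓ₁ 1 * ℓ 0) / Dt with hδ₂
    refine ⟨δ₁, δ₂, ?_⟩
    have base0 : ℓ 0 = δ₁ * ℓ₁ 0 + δ₂ * ℓ₂ 0 := by
      rw [hδ₁, hδ₂]
      field_simp [hDtdef]
      ring
    have base1 : ℓ 1 = δ₁ * ℓ₁ 1 + δ₂ * ℓ₂ 1 := by
      rw [hδ₁, hδ₂]
      field_simp [hDtdef]
      ring
    have main : ∀ k : ℕ, ℓ k = δ₁ * ℓ₁ k + δ₂ * ℓ₂ k ∧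
        ℓ (k+1) = δ₁ * ℓ₁ (k+1) + δ₂ * ℓ₂ (k+1) := by
      intro k
      induction k with
      | zero => exact ⟨base0, base1⟩
      | succ n ih =>
        refine ⟨ih.2, ?_⟩
        have hC : (β₃ + (n:ℝ) + β₁ + β₂ + 2) ≠ 0 := by
          have := hxpos n; intro h; nlinarith
        show ℓ (n+2) = δ₁ * ℓ₁ (n+2) + δ₂ * ℓ₂ (n+2)
        apply mul_left_cancel₀ hC
        linear_combination (hrec n) - δ₁ * (hrec₁ n) - δ₂ * (hrec₂ n) +
          ((ρ₁ + ρ₂) * (β₃ + (n:ℝ) + 1) + β₁ * ρ₂ + β₂ * ρ₁) * ih.2 -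
          ρ₁ * ρ₂ * (β₃ + (n:ℝ)) * ih.1
    exact fun k => (main k).1
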